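/- Let G be a connected undirected graph on [n], let P be an all-pairs set of paths for G with vertex congestion g, and let L≥2 be an integer. For all x,y∈{1}×[n]^L, all b1,b2∈{0,1}, and every vertex v∈[n] with g_{x,b1}(v)≠g_{y,b2}(v), one has r'(g_{x,b1},g_{y,b2},v)·r'(g_{y,b2},g_{x,b1},v) ≥ r(g_{x,b1},g_{y,b2})². -/

import Mathlib

open Finset

/-- An all-pairs set of simple paths in `G`, with `P^{u,u}` the trivial path. -/
structure PathSystem {n : ℕ} (G : SimpleGraph (Fin n)) where
  path : ∀ u v : Fin n, G.Walk u v
  isPath : ∀ u v : Fin n, (path u v).IsPath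
  diag : ∀ u : Fin n, path u u = SimpleGraph.Walk.nil

/-- Vertex congestion of a path system: max over vertices of total occurrences. -/
def PathSystem.congestion {n : ℕ} {G : SimpleGraph (Fin n)} (P : PathSystem G) : ℕ :=
  Finset.univ.sup fun w : Fin n =>
    ∑ u : Fin n, ∑ v : Fin n, (P.path u v).support.count w

/-- Support of the `i`-th quasi-segment `P^{x_i, x_{i+1}}` (0-based). -/
def segSupport {n L : ℕ} {G : SimpleGraph (Fin n)} (P : PathSystem G)
    (x : Fin (L + 1) → Fin n) (i : ℕ) : List (Fin n) :=
  (P.path (x ⟨min i L, by omega⟩) (x ⟨min (i + 1) L, by omega⟩)).support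

/-- Support of the staircase walk `P^{x_j,x_{j+1}} ∘ ⋯ ∘ P^{x_{L-1},x_L}` (0-based `j`). -/
def stairSupportFrom {n L : ℕ} {G : SimpleGraph (Fin n)} (P : PathSystem G)
    (x : Fin (L + 1) → Fin n) (j : ℕ) : List (Fin n) :=
  x ⟨min j L, by omega⟩ ::
    (List.ofFn fun k : Fin (L - j) =>
      (P.path (x ⟨j + k, by have := k.isLt; omega⟩)
              (x ⟨j + k + 1, by have := k.isLt; omega⟩)).support.tail).flatten

/-- `Tail(j, S_x)` (0-based `j`): the staircase from `x_j` with the first occurrence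
of `x_j` removed. -/
def tailSupport {n L : ℕ} {G : SimpleGraph (Fin n)} (P : PathSystem G)
    (x : Fin (L + 1) → Fin n) (j : ℕ) : List (Fin n) :=
  (stairSupportFrom P x j).erase (x ⟨min j L, by omega⟩)

/-- Largest 0-based index `i` such that the prefixes `x_0 … x_i` and `y_0 … y_i` agree
(`J_{x,y} - 1` in 1-based notation). -/
def J0 {n L : ℕ} (x y : Fin (L + 1) → Fin n) : ℕ :=
  (Finset.univ.filter fun i : Fin (L + 1) => ∀ k ≤ i, x k = y k).sup fun i => (i : ℕ)

/-- `q_v(u)`: the number of paths in `P` starting at `u` that contain `v`. -/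
def qcount {n : ℕ} {G : SimpleGraph (Fin n)} (P : PathSystem G) (v u : Fin n) : ℕ :=
  (Finset.univ.filter fun w : Fin n => v ∈ (P.path u w).support).card

/-- Largest 0-based index `i` with `v ∈ P^{x_i,x_{i+1}}`. -/
def maxSegIdx {n L : ℕ} {G : SimpleGraph (Fin n)} (P : PathSystem G)
    (x : Fin (L + 1) → Fin n) (v : Fin n) : ℕ :=
  ((Finset.range L).filter fun i => v ∈ segSupport P x i).sup id

/-- The function `f_x`. -/
noncomputable def fS {n L : ℕ} {G : SimpleGraph (Fin n)} (P : PathSystem G)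
    (x : Fin (L + 1) → Fin n) (v : Fin n) : ℤ :=
  if v ∈ stairSupportFrom P x 0 then
    -(((maxSegIdx P x v : ℤ) + 1) * n) - (((segSupport P x (maxSegIdx P x v)).idxOf v : ℤ) + 1)
  else (G.dist v (x 0) : ℤ)

/-- The function `g_{x,b}`. -/
noncomputable def gS {n L : ℕ} {G : SimpleGraph (Fin n)} (P : PathSystem G)
    (x : Fin (L + 1) → Fin n) (b : ℤ) (v : Fin n) : ℤ × ℤ :=
  if v = x (Fin.last L) then (fS P x v, b) else (fS P x v, -1)

/-- The relation `r*`. -/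
noncomputable def rstar {n L : ℕ} (x y : Fin (L + 1) → Fin n) (b1 b2 : ℤ) : ℝ :=
  if b1 = b2 ∨ ¬ Function.Injective x ∨ ¬ Function.Injective y then 0
  else (n : ℝ) ^ (J0 x y + 1)

/-- The relation `r`. -/
noncomputable def rrel {n L : ℕ} (x y : Fin (L + 1) → Fin n) (b1 b2 : ℤ) : ℝ :=
  if x = y then 0 else rstar x y b1 b2

/-- The relation `r'`. -/
noncomputable def rprime {n L : ℕ} {G : SimpleGraph (Fin n)} (P : PathSystem G) (g : ℕ)
    (x y : Fin (L + 1) → Fin n) (b1 b2 : ℤ) (v : Fin n) : ℝ :=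
  if gS P x b1 v = gS P y b2 v ∨ b1 = b2 then 0
  else if v ∈ tailSupport P x (J0 x y) ∧ v ∉ tailSupport P y (J0 x y) then
    rrel x y b1 b2 * g / (n : ℝ) ^ (1.5 : ℝ)
  else if v ∈ tailSupport P y (J0 x y) ∧ v ∉ tailSupport P x (J0 x y) then
    rrel x y b1 b2 * (n : ℝ) ^ (1.5 : ℝ) / g
  else rrel x y b1 b2

/-- The vertex congestion of the graph `G`. -/
noncomputable def vertexCongestion {n : ℕ} (G : SimpleGraph (Fin n)) : ℕ :=
  sInf {c | ∃ P : PathSystem G, P.congestion = c}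

/-- The number of cut edges `|E(S, V∖S)|`. -/
def cutEdges {n : ℕ} (G : SimpleGraph (Fin n)) [DecidableRel G.Adj]
    (S : Finset (Fin n)) : ℕ :=
  ((S ×ˢ Sᶜ).filter fun p => G.Adj p.1 p.2).card


lemma J0_symm {n L : ℕ} (x y : Fin (L + 1) → Fin n) : J0 x y = J0 y x := by
  unfold J0
  congr 1
  ext i
  simp only [Finset.mem_filter, Finset.mem_univ, true_and]
  exact ⟨fun h k hk => (h k hk).symm, fun h k hk => (h k hk).symm⟩

lemma rrel_symm {n L : ℕ} (x y : Fin (L + 1) → Fin n) (b1 b2 : ℤ) :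
    rrel x y b1 b2 = rrel y x b2 b1 := by
  unfold rrel rstar
  rw [J0_symm]
  by_cases hxy : x = y
  · simp [hxy]
  · have hyx : ¬ y = x := fun h => hxy h.symm
    by_cases hc : b1 = b2 ∨ ¬ Function.Injective x ∨ ¬ Function.Injective y
    · have hc' : b2 = b1 ∨ ¬ Function.Injective y ∨ ¬ Function.Injective x := by
        rcases hc with h|h|h
        exacts [Or.inl h.symm, Or.inr (Or.inr h), Or.inr (Or.inl h)]
      simp only [if_neg hxy, if_neg hyx, if_pos hc, if_pos hc']
    · have hc' : ¬ (b2 = b1 ∨ ¬ Function.Injective y ∨ ¬ Function.Injective x) := by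
        push_neg at hc ⊢
        exact ⟨hc.1.symm, hc.2.2, hc.2.1⟩
      simp only [if_neg hxy, if_neg hyx, if_neg hc, if_neg hc']

lemma congestion_pos {n : ℕ} (hn : 2 ≤ n) {G : SimpleGraph (Fin n)} (P : PathSystem G) :
    1 ≤ P.congestion := by
  have hw : (⟨0, by omega⟩ : Fin n) ∈ (Finset.univ : Finset (Fin n)) := Finset.mem_univ _
  set w : Fin n := ⟨0, by omega⟩
  have h1 : 1 ≤ ∑ v : Fin n, (P.path w v).support.count w := by
    have : (P.path w w).support.count w = 1 := by
      rw [P.diag]; simp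
    calc 1 = (P.path w w).support.count w := this.symm
    _ ≤ ∑ v : Fin n, (P.path w v).support.count w :=
        Finset.single_le_sum (f := fun v => (P.path w v).support.count w)
          (fun _ _ => Nat.zero_le _) (Finset.mem_univ w)
  have h2 : 1 ≤ ∑ u : Fin n, ∑ v : Fin n, (P.path u v).support.count w :=
    le_trans h1 (Finset.single_le_sum (f := fun u => ∑ v : Fin n, (P.path u v).support.count w)
      (fun _ _ => Nat.zero_le _) (Finset.mem_univ w))
  refine le_trans h2 ?_
  exact Finset.le_sup (f := fun w : Fin n => ∑ u : Fin n, ∑ v : Fin n,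
    (P.path u v).support.count w) (Finset.mem_univ w)

theorem stmt5 {n L g : ℕ} (hn : 2 ≤ n) (hL : 2 ≤ L)
    (G : SimpleGraph (Fin n)) (hG : G.Connected)
    (P : PathSystem G) (hg : P.congestion = g)
    (x y : Fin (L + 1) → Fin n)
    (hx1 : x 0 = ⟨0, by omega⟩) (hy1 : y 0 = ⟨0, by omega⟩)
    (b1 b2 : ℤ) (hb1 : b1 = 0 ∨ b1 = 1) (hb2 : b2 = 0 ∨ b2 = 1)
    (v : Fin n) (hv : gS P x b1 v ≠ gS P y b2 v) :
    rrel x y b1 b2 ^ 2 ≤ rprime P g x y b1 b2 v * rprime P g y x b2 b1 v := by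
  by_cases hb : b1 = b2
  · subst hb
    have h1 : rprime P g x y b1 b1 v = 0 := by
      unfold rprime; rw [if_pos (Or.inr rfl)]
    have h2 : rprime P g y x b1 b1 v = 0 := by
      unfold rprime; rw [if_pos (Or.inr rfl)]
    have h3 : rrel x y b1 b1 = 0 := by
      unfold rrel rstar
      split_ifs with hh1 hh2
      · rfl
      · rfl
      · exact absurd (Or.inl rfl) hh2
    rw [h1, h2, h3]
    norm_num
  · have hg1 : 1 ≤ g := hg ▸ congestion_pos hn P
    have hg0 : (g : ℝ) ≠ 0 := by positivity
    have hN : ((n : ℝ) ^ (1.5 : ℝ)) ≠ 0 := by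
      have : (0:ℝ) < (n : ℝ) ^ (1.5 : ℝ) :=
        Real.rpow_pos_of_pos (by exact_mod_cast Nat.lt_of_lt_of_le Nat.zero_lt_two hn) _
      exact this.ne'
    have hv' : gS P y b2 v ≠ gS P x b1 v := hv.symm
    have hb' : b2 ≠ b1 := fun h => hb h.symm
    have hr : rrel y x b2 b1 = rrel x y b1 b2 := (rrel_symm x y b1 b2).symm
    have hJ : J0 y x = J0 x y := J0_symm y x
    have hc1 : ¬ (gS P x b1 v = gS P y b2 v ∨ b1 = b2) := by tauto
    have hc2 : ¬ (gS P y b2 v = gS P x b1 v ∨ b2 = b1) := by tauto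
    unfold rprime
    rw [if_neg hc1, if_neg hc2, hr, hJ]
    set r := rrel x y b1 b2 with hrdef
    by_cases hA : v ∈ tailSupport P x (J0 x y) <;>
      by_cases hB : v ∈ tailSupport P y (J0 x y)
    · rw [if_neg (fun h => h.2 hB), if_neg (fun h => h.2 hA),
        if_neg (fun h => h.2 hA), if_neg (fun h => h.2 hB), sq]
    · rw [if_pos ⟨hA, hB⟩, if_neg (fun h => hB h.1), if_pos ⟨hA, hB⟩]
      rw [show r * ↑g / (n:ℝ) ^ (1.5:ℝ) * (r * (n:ℝ) ^ (1.5:ℝ) / ↑g) = r ^ 2 by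
        field_simp]
    · rw [if_neg (fun h => hA h.1), if_pos ⟨hB, hA⟩, if_pos ⟨hB, hA⟩]
      rw [show r * (n:ℝ) ^ (1.5:ℝ) / ↑g * (r * ↑g / (n:ℝ) ^ (1.5:ℝ)) = r ^ 2 by
        field_simp]
    · rw [if_neg (fun h => hA h.1), if_neg (fun h => hB h.1),
        if_neg (fun h => hB h.1), if_neg (fun h => hA h.1), sq]
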